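/- Let Q ∈ ℂ^{n×n} be Hermitian PSD, P ∈ ℂ^{n×n} Hermitian positive definite, and B ∈ ℂ^{n×s}. For ε ≥ 0 define W(ε) = (Q + εP)^{-1} B (assuming invertibility). Then f(ε) = Tr(W(ε)ᴴ P W(ε)) is monotonically non-increasing in ε on [0, ∞). -/

import Mathlib

open Matrix
open scoped ComplexOrder

private lemma smul_psd {k : ℕ} {P : Matrix (Fin k) (Fin k) ℂ} (hP : P.PosSemidef)
    {c : ℝ} (hc : 0 ≤ c) : ((c : ℂ) • P).PosSemidef := by
  constructor
  · have h1 := hP.1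
    unfold Matrix.IsHermitian at *
    rw [conjTranspose_smul, h1]
    simp
  · intro x
    exact (hP.smul (show (0 : ℂ) ≤ (c : ℂ) by exact_mod_cast hc)).2 x

private lemma trace_re_nonneg {k : ℕ} {A : Matrix (Fin k) (Fin k) ℂ} (hA : A.PosSemidef) :
    0 ≤ A.trace.re := by
  have h : ∀ i, 0 ≤ (A i i).re := by
    intro i
    have := hA.re_dotProduct_nonneg (Pi.single i 1)
    simpa [dotProduct, mulVec, Pi.single_apply, Finset.sum_ite_eq] using this
  simp only [Matrix.trace, Matrix.diag, Complex.re_sum]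
  exact Finset.sum_nonneg fun i _ => h i

/-- Let `Q` be Hermitian PSD, `P` Hermitian positive definite, `B` arbitrary, and
`W(ε) = (Q + εP)⁻¹ B` (assuming invertibility). Then `ε ↦ Tr(W(ε)ᴴ P W(ε))` is
monotonically non-increasing on `[0, ∞)`. -/
theorem stmt_9 (n s : ℕ) (Q P : Matrix (Fin n) (Fin n) ℂ) (B : Matrix (Fin n) (Fin s) ℂ)
    (hQ : Q.PosSemidef) (hP : P.PosDef)
    (ε₁ ε₂ : ℝ) (h0 : 0 ≤ ε₁) (h12 : ε₁ ≤ ε₂)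
    (h1 : IsUnit (Q + (ε₁ : ℂ) • P)) (h2 : IsUnit (Q + (ε₂ : ℂ) • P)) :
    ((((Q + (ε₂ : ℂ) • P)⁻¹ * B)ᴴ * P * ((Q + (ε₂ : ℂ) • P)⁻¹ * B)).trace).re ≤
      ((((Q + (ε₁ : ℂ) • P)⁻¹ * B)ᴴ * P * ((Q + (ε₁ : ℂ) • P)⁻¹ * B)).trace).re := by
  set M₁ := Q + (ε₁ : ℂ) • P with hM₁def
  set M₂ := Q + (ε₂ : ℂ) • P with hM₂def
  have hdet1 : IsUnit M₁.det := (isUnit_iff_isUnit_det _).mp h1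
  have hdet2 : IsUnit M₂.det := (isUnit_iff_isUnit_det _).mp h2
  set A := M₁⁻¹ with hAdef
  set C := M₂⁻¹ with hCdef
  have hM₁psd : M₁.PosSemidef := hQ.add (smul_psd hP.posSemidef h0)
  have hM₂psd : M₂.PosSemidef := hQ.add (smul_psd hP.posSemidef (h0.trans h12))
  have hApsd : A.PosSemidef := hM₁psd.inv
  have hCpsd : C.PosSemidef := hM₂psd.inv
  have hAH : Aᴴ = A := hApsd.1
  have hCH : Cᴴ = C := hCpsd.1
  have hPH : Pᴴ = P := hP.1
  have hAM : A * M₁ = 1 := nonsing_inv_mul _ hdet1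
  have hMA : M₁ * A = 1 := mul_nonsing_inv _ hdet1
  have hCM : C * M₂ = 1 := nonsing_inv_mul _ hdet2
  have hMC : M₂ * C = 1 := mul_nonsing_inv _ hdet2
  set δ : ℝ := ε₂ - ε₁ with hδdef
  have hδ : 0 ≤ δ := sub_nonneg.2 h12
  have hdiff : M₂ - M₁ = (δ : ℂ) • P := by
    rw [hM₁def, hM₂def, hδdef]
    push_cast
    module
  have key1 : A - C = (δ : ℂ) • (A * P * C) := by
    have e1 : A * (M₂ - M₁) * C = A - C := by
      rw [Matrix.mul_sub, Matrix.sub_mul, Matrix.mul_assoc A M₂ C, hMC, Matrix.mul_one,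
        hAM, Matrix.one_mul]
    rw [← e1, hdiff, Matrix.mul_smul, Matrix.smul_mul]
  have key2 : A - C = (δ : ℂ) • (C * P * A) := by
    have e1 : C * (M₂ - M₁) * A = A - C := by
      rw [Matrix.mul_sub, Matrix.sub_mul, Matrix.mul_assoc C M₁ A, hMA, Matrix.mul_one,
        hCM, Matrix.one_mul]
    rw [← e1, hdiff, Matrix.mul_smul, Matrix.smul_mul]
  set D := A - C with hDdef
  have hDH : Dᴴ = D := by rw [hDdef, conjTranspose_sub, hAH, hCH]
  have hX : A * P * A - C * P * C =
      D * P * D + ((δ : ℂ) • (C * P * A * P * C) + (δ : ℂ) • (C * P * A * P * C)) := by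
    have expand : A * P * A - C * P * C = D * P * D + (D * P * C + C * P * D) := by
      rw [hDdef]
      noncomm_ring
    rw [expand]
    congr 1
    congr 1
    · rw [show D = (δ : ℂ) • (C * P * A) from key2, Matrix.smul_mul, Matrix.smul_mul]
    · rw [show D = (δ : ℂ) • (A * P * C) from key1, Matrix.mul_smul, ← Matrix.mul_assoc,
        ← Matrix.mul_assoc]
  have hDPD : (D * P * D).PosSemidef := by
    have := hP.posSemidef.conjTranspose_mul_mul_same D
    rwa [hDH] at this
  have hCPAPC : ((δ : ℂ) • (C * P * A * P * C)).PosSemidef := by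
    have h := hApsd.conjTranspose_mul_mul_same (P * C)
    rw [conjTranspose_mul, hPH, hCH, ← Matrix.mul_assoc] at h
    exact smul_psd h hδ
  have hXpsd : (A * P * A - C * P * C).PosSemidef := by
    rw [hX]
    exact hDPD.add (hCPAPC.add hCPAPC)
  rw [← sub_nonneg, ← Complex.sub_re, ← trace_sub]
  have hrw : ((A * B)ᴴ * P * (A * B)) - ((C * B)ᴴ * P * (C * B)) =
      Bᴴ * (A * P * A - C * P * C) * B := by
    rw [conjTranspose_mul, conjTranspose_mul, hAH, hCH]
    simp only [Matrix.mul_sub, Matrix.sub_mul, Matrix.mul_assoc]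
  rw [hrw]
  exact trace_re_nonneg (hXpsd.conjTranspose_mul_mul_same B)
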